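/- (Model BB) For all c1, c2 > 0, the system q2 = 2*c1*q1*(q1+q2)^2, q1 = 2*c2*q2*(q1+q2)^2 with q1, q2 > 0 has exactly one solution (q1*,q2*); moreover the Jacobian matrix J = [[0, R1'(q2*)],[R2'(q1*), 0]] satisfies Jury's conditions 1 + tr(J) + det(J) > 0, 1 - tr(J) + det(J) > 0, and 1 - det(J) > 0 (equivalently |R1'(q2*)*R2'(q1*)| < 1); i.e., the unique positive equilibrium of Model BB is locally stable for all feasible parameter values. -/

import Mathlib

/-- Model BB: the equilibrium system `q2 = 2*c1*q1*(q1+q2)^2`,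
`q1 = 2*c2*q2*(q1+q2)^2` has exactly one positive solution, and at that
solution the Jacobian matrix `[[0, R1'],[R2', 0]]` (with the implicit
derivatives of the best-response functions) satisfies Jury's conditions. -/
theorem modelBB_unique_stable (c1 c2 : ℝ) (hc1 : 0 < c1) (hc2 : 0 < c2) :
    (∃! p : ℝ × ℝ, 0 < p.1 ∧ 0 < p.2 ∧
      p.2 = 2 * c1 * p.1 * (p.1 + p.2) ^ 2 ∧
      p.1 = 2 * c2 * p.2 * (p.1 + p.2) ^ 2) ∧
    (∀ q1 q2 : ℝ, 0 < q1 → 0 < q2 →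
      q2 = 2 * c1 * q1 * (q1 + q2) ^ 2 → q1 = 2 * c2 * q2 * (q1 + q2) ^ 2 →
      ∀ J : Matrix (Fin 2) (Fin 2) ℝ,
        J = !![0, -(4 * c1 * q2 * q1 + 4 * c1 * q1 ^ 2 - 1) /
                 (2 * c1 * (q2 ^ 2 + 4 * q1 * q2 + 3 * q1 ^ 2));
               -(4 * c2 * q1 * q2 + 4 * c2 * q2 ^ 2 - 1) /
                 (2 * c2 * (q1 ^ 2 + 4 * q1 * q2 + 3 * q2 ^ 2)), 0] →
        1 + Matrix.trace J + Matrix.det J > 0 ∧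
        1 - Matrix.trace J + Matrix.det J > 0 ∧
        1 - Matrix.det J > 0) := by
  have hA : (0:ℝ) < 4 * c1 * c2 := by positivity
  constructor
  · -- existence and uniqueness
    set s : ℝ := (4 * c1 * c2) ^ (-(1/4) : ℝ) with hsdef
    have hs : 0 < s := Real.rpow_pos_of_pos hA _
    have hs4 : 4 * c1 * c2 * s ^ 4 = 1 := by
      have h1 : s ^ (4:ℕ) = (4 * c1 * c2) ^ ((-(1/4) : ℝ) * (4:ℕ)) := by
        rw [hsdef, ← Real.rpow_natCast ((4 * c1 * c2) ^ (-(1/4):ℝ)) 4,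
          ← Real.rpow_mul hA.le]
      have h2 : ((-(1/4) : ℝ) * (4:ℕ)) = (-1 : ℝ) := by norm_num
      rw [h1, h2, Real.rpow_neg_one]
      field_simp
    set d : ℝ := 1 + 2 * c1 * s ^ 2 with hddef
    have hd : 0 < d := by positivity
    have hsum : s / d + 2 * c1 * s ^ 3 / d = s := by
      field_simp
      ring
    refine ⟨(s / d, 2 * c1 * s ^ 3 / d), ⟨by positivity, by positivity, ?_, ?_⟩, ?_⟩
    · show 2 * c1 * s ^ 3 / d = 2 * c1 * (s / d) * (s / d + 2 * c1 * s ^ 3 / d) ^ 2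
      rw [hsum]; field_simp
    · show s / d = 2 * c2 * (2 * c1 * s ^ 3 / d) * (s / d + 2 * c1 * s ^ 3 / d) ^ 2
      rw [hsum]
      rw [div_eq_iff hd.ne']
      field_simp
      linear_combination (-1) * hs4
    · rintro ⟨p1, p2⟩ ⟨hp1, hp2, e1, e2⟩
      simp only at hp1 hp2 e1 e2
      have ht : 0 < p1 + p2 := by linarith
      have hkey : p1 * (4 * c1 * c2 * (p1 + p2) ^ 4 - 1) = 0 := by
        linear_combination (-(2 * c2 * (p1 + p2) ^ 2)) * e1 - e2
      have ht4 : (p1 + p2) ^ 4 = s ^ 4 := by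
        have h1 : 4 * c1 * c2 * (p1 + p2) ^ 4 = 1 := by
          rcases mul_eq_zero.1 hkey with h | h
          · exact absurd h hp1.ne'
          · linarith
        have := hA.ne'
        nlinarith [hs4, h1]
      have hts : p1 + p2 = s := by
        have := pow_left_inj₀ ht.le hs.le (n := 4) (by norm_num)
        exact this.1 ht4
      have hq1 : p1 = s / d := by
        rw [eq_div_iff hd.ne', hddef]
        rw [hts] at e1
        linear_combination hts - e1
      have hq2 : p2 = 2 * c1 * s ^ 3 / d := by
        rw [eq_div_iff hd.ne', hddef]
        rw [hts] at e1
        linear_combination e1 + 2 * c1 * s ^ 2 * hts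
      simp only [Prod.mk.injEq]
      exact ⟨hq1, hq2⟩
  · -- stability
    intro q1 q2 hq1 hq2 h1 h2 J hJ
    subst hJ
    set N1 : ℝ := 4 * c1 * q2 * q1 + 4 * c1 * q1 ^ 2 - 1 with hN1
    set N2 : ℝ := 4 * c2 * q1 * q2 + 4 * c2 * q2 ^ 2 - 1 with hN2
    set D1 : ℝ := 2 * c1 * (q2 ^ 2 + 4 * q1 * q2 + 3 * q1 ^ 2) with hD1
    set D2 : ℝ := 2 * c2 * (q1 ^ 2 + 4 * q1 * q2 + 3 * q2 ^ 2) with hD2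
    have hD1p : 0 < D1 := by rw [hD1]; positivity
    have hD2p : 0 < D2 := by rw [hD2]; positivity
    have e1 : N1 * (q1 + q2) = q2 - q1 := by rw [hN1]; linear_combination (-2) * h1
    have e2 : N2 * (q1 + q2) = q1 - q2 := by rw [hN2]; linear_combination (-2) * h2
    have e3 : D1 * q1 * (q1 + q2) = q2 * (q2 + 3 * q1) := by
      rw [hD1]; linear_combination (-(q2 + 3 * q1)) * h1
    have e4 : D2 * q2 * (q1 + q2) = q1 * (q1 + 3 * q2) := by
      rw [hD2]; linear_combination (-(q1 + 3 * q2)) * h2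
    have hs2 : 0 < (q1 + q2) ^ 2 := by positivity
    have hNNeq : N1 * N2 * (q1 + q2) ^ 2 = -((q1 - q2) ^ 2) := by
      linear_combination (N2 * (q1 + q2)) * e1 + (q2 - q1) * e2
    have hNN : N1 * N2 ≤ 0 := by nlinarith [sq_nonneg (q1 - q2)]
    have hDDNN : 0 < D1 * D2 + N1 * N2 := by
      have hkeyeq : (D1 * D2 + N1 * N2) * (q1 * q2 * (q1 + q2) ^ 2)
          = q1 * q2 * (2 * q1 ^ 2 + 12 * q1 * q2 + 2 * q2 ^ 2) := by
        have e34 : (D1 * q1 * (q1 + q2)) * (D2 * q2 * (q1 + q2))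
            = (q2 * (q2 + 3 * q1)) * (q1 * (q1 + 3 * q2)) := by rw [e3, e4]
        linear_combination e34 + (q1 * q2) * hNNeq
      have hpos : 0 < q1 * q2 * (q1 + q2) ^ 2 := by positivity
      have hRHS : 0 < q1 * q2 * (2 * q1 ^ 2 + 12 * q1 * q2 + 2 * q2 ^ 2) := by positivity
      nlinarith [hkeyeq, hpos, hRHS]
    have hab : (-N1 / D1) * (-N2 / D2) = (N1 * N2) / (D1 * D2) := by
      rw [div_mul_div_comm, neg_mul_neg]
    have habge : -1 < (N1 * N2) / (D1 * D2) := by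
      rw [lt_div_iff₀ (by positivity)]
      linarith
    have hable : (N1 * N2) / (D1 * D2) ≤ 0 :=
      div_nonpos_of_nonpos_of_nonneg hNN (by positivity)
    have htr : Matrix.trace !![(0:ℝ), -N1 / D1; -N2 / D2, 0] = 0 := by
      simp [Matrix.trace_fin_two]
    have hdet : Matrix.det !![(0:ℝ), -N1 / D1; -N2 / D2, 0]
        = -((-N1 / D1) * (-N2 / D2)) := by
      simp [Matrix.det_fin_two]
    rw [htr, hdet, hab]
    refine ⟨by linarith, by linarith, by linarith⟩
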